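/- Let $A$ be a unital associative ring and let $p, q \ge 2$ be integers. Then for all $a_1, \dots, a_p, b_1, \dots, b_q, v, w \in A$, writing $c_1 = [a_1, \dots, a_p]$ and $c_2 = [b_1, \dots, b_q]$, the element $[c_1, v][c_2, w] + [c_1, w][c_2, v]$ belongs to $T^{(p+q+1)}(A)$. -/

import Mathlib

/-- The ring commutator `[a, b] = a * b - b * a`. -/
def brk {A : Type*} [NonUnitalNonAssocRing A] (a b : A) : A := a * b - b * a

/-- The left-normed commutator `[a 0, a 1, ..., a (k-1)]`. -/
def lnc {A : Type*} [NonUnitalNonAssocRing A] : ∀ {k : ℕ}, (Fin k → A) → A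
  | 0, _ => 0
  | 1, a => a 0
  | k + 2, a => brk (lnc (Fin.init a)) (a (Fin.last (k + 1)))

/-- `T A m` is the two-sided ideal of `A` generated by all left-normed commutators
of length `m` (for `m = 1` this is all of `A`). -/
def T (A : Type*) [NonUnitalNonAssocRing A] (m : ℕ) : TwoSidedIdeal A :=
  TwoSidedIdeal.span {x | ∃ a : Fin m → A, x = lnc a}

section aux
variable {A : Type*} [Ring A]

lemma lnc_succ_succ {k : ℕ} (a : Fin (k + 2) → A) :
    lnc a = brk (lnc (Fin.init a)) (a (Fin.last (k + 1))) := rfl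

lemma lnc_one (a : Fin 1 → A) : lnc a = a 0 := rfl

lemma lnc_snoc {k : ℕ} (a : Fin (k + 1) → A) (x : A) :
    lnc (Fin.snoc a x) = brk (lnc a) x := by
  rw [lnc_succ_succ, Fin.init_snoc, Fin.snoc_last]

/-- The additive subgroup generated by left-normed commutators of length `m`. -/
def Glnc (A : Type*) [Ring A] (m : ℕ) : AddSubgroup A :=
  AddSubgroup.closure {x | ∃ a : Fin m → A, x = lnc a}

lemma Glnc_le_T (m : ℕ) {x : A} (hx : x ∈ Glnc A m) : x ∈ T A m := by
  induction hx using AddSubgroup.closure_induction with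
  | mem y hy => exact TwoSidedIdeal.subset_span hy
  | zero => exact (T A m).zero_mem
  | add _ _ _ _ h1 h2 => exact (T A m).add_mem h1 h2
  | neg _ _ h => exact (T A m).neg_mem h

lemma brk_mem_succ (k : ℕ) {c : A} (hc : c ∈ Glnc A (k + 1)) (x : A) :
    brk c x ∈ Glnc A (k + 2) := by
  induction hc using AddSubgroup.closure_induction with
  | mem y hy =>
    obtain ⟨a, rfl⟩ := hy
    exact AddSubgroup.subset_closure ⟨Fin.snoc a x, (lnc_snoc a x).symm⟩
  | zero => simpa [brk] using (Glnc A (k + 2)).zero_mem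
  | add y z _ _ h1 h2 =>
    have : brk (y + z) x = brk y x + brk z x := by simp only [brk]; noncomm_ring
    rw [this]; exact add_mem h1 h2
  | neg y _ h =>
    have : brk (-y) x = -(brk y x) := by simp only [brk]; noncomm_ring
    rw [this]; exact neg_mem h

lemma brk_lnc_mem (m : ℕ) : ∀ (k : ℕ) (c : A), c ∈ Glnc A (k + 1) →
    ∀ b : Fin (m + 1) → A, brk c (lnc b) ∈ Glnc A (k + m + 2) := by
  induction m with
  | zero =>
    intro k c hc b
    rw [lnc_one]
    exact brk_mem_succ k hc (b 0)
  | succ m ih =>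
    intro k c hc b
    rw [lnc_succ_succ]
    set d := lnc (Fin.init b)
    set u := b (Fin.last (m + 1))
    have jac : brk c (brk d u) = brk (brk c d) u - brk (brk c u) d := by
      simp only [brk]; noncomm_ring
    rw [jac]
    refine sub_mem ?_ ?_
    · have h1 : brk c d ∈ Glnc A (k + m + 2) := ih k c hc (Fin.init b)
      have := brk_mem_succ (k + m + 1) (by simpa using h1) u
      simpa [show k + m + 1 + 2 = k + (m + 1) + 2 by ring] using this
    · have h1 : brk c u ∈ Glnc A (k + 2) := brk_mem_succ k hc u
      have := ih (k + 1) (brk c u) (by simpa using h1) (Fin.init b)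
      simpa [show k + 1 + m + 2 = k + (m + 1) + 2 by ring] using this

lemma T_succ_le (k : ℕ) {x : A} (hx : x ∈ T A (k + 2)) : x ∈ T A (k + 1) := by
  rw [T, TwoSidedIdeal.mem_span_iff] at hx
  apply hx
  rintro y ⟨a, rfl⟩
  rw [lnc_succ_succ, brk]
  exact (T A (k+1)).sub_mem
    ((T A (k+1)).mul_mem_right _ _ (TwoSidedIdeal.subset_span ⟨Fin.init a, rfl⟩))
    ((T A (k+1)).mul_mem_left _ _ (TwoSidedIdeal.subset_span ⟨Fin.init a, rfl⟩))

end aux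

theorem comm_c1_c2_cross_mem {A : Type*} [Ring A] (p q : ℕ) (hp : 2 ≤ p) (hq : 2 ≤ q)
    (a : Fin p → A) (b : Fin q → A) (v w : A) :
    brk (lnc a) v * brk (lnc b) w + brk (lnc a) w * brk (lnc b) v ∈ T A (p + q + 1) := by
  obtain ⟨p, rfl⟩ : ∃ p', p = p' + 2 := ⟨p - 2, by omega⟩
  obtain ⟨q, rfl⟩ : ∃ q', q = q' + 2 := ⟨q - 2, by omega⟩
  set c1 := lnc a with hc1
  set c2 := lnc b with hc2
  have key : brk c1 v * brk c2 w + brk c1 w * brk c2 v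
      = brk c1 (brk c2 (v * w)) - brk c1 (brk (brk c2 v) w)
        - v * brk c1 (brk c2 w) - w * brk c1 (brk c2 v) := by
    simp only [brk]; noncomm_ring
  rw [key]
  have hc1m : c1 ∈ Glnc A (p + 1 + 1) := AddSubgroup.subset_closure ⟨a, hc1⟩
  have main : ∀ (x : A), brk c1 (brk c2 x) ∈ T A (p + 2 + (q + 2) + 1) := by
    intro x
    have : brk c2 x = lnc (Fin.snoc b x) := (lnc_snoc b x).symm
    rw [this]
    have := brk_lnc_mem (q + 2) (p + 1) c1 hc1m (Fin.snoc b x)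
    have h2 := Glnc_le_T _ this
    have he : p + 1 + (q + 2) + 2 = p + 2 + (q + 2) + 1 := by ring
    rwa [he] at h2
  have term2 : brk c1 (brk (brk c2 v) w) ∈ T A (p + 2 + (q + 2) + 1) := by
    have h0 : brk (brk c2 v) w = lnc (Fin.snoc (Fin.snoc b v) w) := by
      rw [lnc_snoc, lnc_snoc]
    rw [h0]
    have := brk_lnc_mem (q + 3) (p + 1) c1 hc1m (Fin.snoc (Fin.snoc b v) w)
    have h2 := Glnc_le_T _ this
    have he : p + 1 + (q + 3) + 2 = p + 2 + (q + 2) + 1 + 1 := by ring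
    rw [he] at h2
    exact T_succ_le _ h2
  refine (T _ _).sub_mem ((T _ _).sub_mem ((T _ _).sub_mem (main (v * w)) term2) ?_) ?_
  · exact (T _ _).mul_mem_left _ _ (main w)
  · exact (T _ _).mul_mem_left _ _ (main v)
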